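/- Let φ(x*), φ(x₁), φ(x) ∈ ℝ^d be unit vectors with φ(x₁)ᵀφ(x) = 0, let λ' > 0, and write a = φ(x*)ᵀφ(x₁), b = φ(x*)ᵀφ(x). Define the uncertainty reduction ψ(X) = σ²_∅(x*) − σ²_X(x*) where σ²_X is the regularized posterior variance with multiset X. Then ψ({x₁, x₁}) = 2a² / (2 + λ') and ψ({x₁, x}) = (a² + b²) / (1 + λ'). Consequently, ψ({x₁, x}) > ψ({x₁, x₁}) if and only if b² > (λ' / (2 + λ')) · a². -/

import Mathlib

open Matrix

/-- Regularized posterior (conditional) kernel of the linear kernel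
`k(a,b) = ⟪φ a, φ b⟫` after conditioning on the points `xs` with regularization `lam`:
`k_X(a,b) = k(a,b) − k_X(a)ᵀ (K_X + λ I)⁻¹ k_X(b)`.
For `n = 0` this is the prior kernel; the diagonal `postK φ lam xs x x` is `σ²_X(x)`. -/
noncomputable def postK {α E : Type*} [NormedAddCommGroup E] [InnerProductSpace ℝ E]
    {n : ℕ} (φ : α → E) (lam : ℝ) (xs : Fin n → α) (a b : α) : ℝ :=
  (inner ℝ (φ a) (φ b) : ℝ) -
    (fun i => (inner ℝ (φ (xs i)) (φ a) : ℝ)) ⬝ᵥ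
      ((Matrix.of (fun i j => (inner ℝ (φ (xs i)) (φ (xs j)) : ℝ))
          + lam • (1 : Matrix (Fin n) (Fin n) ℝ))⁻¹).mulVec
        (fun i => (inner ℝ (φ (xs i)) (φ b) : ℝ))

/-- Balancing relevance and diversity: for unit vectors `φ(x*) = ustar`, `φ(x₁) = u1`,
`φ(x) = u` with `u1 ⊥ u`, `a = ⟪ustar,u1⟫`, `b = ⟪ustar,u⟫`, the uncertainty reductions
`ψ(X) = σ²_∅(x*) − σ²_X(x*)` satisfy `ψ({x₁,x₁}) = 2a²/(2+λ')`, `ψ({x₁,x}) = (a²+b²)/(1+λ')`,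
and `ψ({x₁,x}) > ψ({x₁,x₁})` iff `b² > (λ'/(2+λ'))·a²`. -/
theorem relevance_diversity_tradeoff {E : Type*} [NormedAddCommGroup E] [InnerProductSpace ℝ E]
    (ustar u1 u : E) (hstar : ‖ustar‖ = 1) (h1 : ‖u1‖ = 1) (h2 : ‖u‖ = 1)
    (horth : (inner ℝ u1 u : ℝ) = 0) (lam : ℝ) (hlam : 0 < lam)
    (a b : ℝ) (ha : a = (inner ℝ ustar u1 : ℝ)) (hb : b = (inner ℝ ustar u : ℝ)) :
    ((inner ℝ ustar ustar : ℝ) - postK (id : E → E) lam ![u1, u1] ustar ustar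
        = 2 * a ^ 2 / (2 + lam))
    ∧ ((inner ℝ ustar ustar : ℝ) - postK (id : E → E) lam ![u1, u] ustar ustar
        = (a ^ 2 + b ^ 2) / (1 + lam))
    ∧ (((inner ℝ ustar ustar : ℝ) - postK (id : E → E) lam ![u1, u1] ustar ustar
          < (inner ℝ ustar ustar : ℝ) - postK (id : E → E) lam ![u1, u] ustar ustar) ↔
        lam / (2 + lam) * a ^ 2 < b ^ 2) := by
  have h2l : (0:ℝ) < 2 + lam := by linarith
  have h1l : (0:ℝ) < 1 + lam := by linarith
  have hlam' : lam ≠ 0 := ne_of_gt hlam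
  have hi11 : (inner ℝ u1 u1 : ℝ) = 1 := by
    rw [real_inner_self_eq_norm_sq, h1]; norm_num
  have hiuu : (inner ℝ u u : ℝ) = 1 := by
    rw [real_inner_self_eq_norm_sq, h2]; norm_num
  have horth' : (inner ℝ u u1 : ℝ) = 0 := by rw [real_inner_comm]; exact horth
  have ha' : (inner ℝ u1 ustar : ℝ) = a := by rw [real_inner_comm, ← ha]
  have hb' : (inner ℝ u ustar : ℝ) = b := by rw [real_inner_comm, ← hb]
  have ha2 : (inner ℝ ustar u1 : ℝ) = a := ha.symm
  have hb2 : (inner ℝ ustar u : ℝ) = b := hb.symm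
  -- first matrix
  have hM1 : (Matrix.of (fun i j => (inner ℝ ((![u1, u1]) i) ((![u1, u1]) j) : ℝ))
      + lam • (1 : Matrix (Fin 2) (Fin 2) ℝ)) = !![1+lam,1;1,1+lam] := by
    ext i j
    fin_cases i <;> fin_cases j <;>
      simp [hi11, h1, Matrix.one_apply] <;> ring
  have hM1inv : (!![1+lam,1;1,1+lam] : Matrix (Fin 2) (Fin 2) ℝ)⁻¹
      = (lam*(2+lam))⁻¹ • !![1+lam,-1;-1,1+lam] := by
    apply Matrix.inv_eq_right_inv
    ext i j
    fin_cases i <;> fin_cases j <;>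
      · simp [Matrix.mul_apply, Fin.sum_univ_two, Matrix.one_apply]
        try field_simp
        try ring
  have hM2 : (Matrix.of (fun i j => (inner ℝ ((![u1, u]) i) ((![u1, u]) j) : ℝ))
      + lam • (1 : Matrix (Fin 2) (Fin 2) ℝ)) = !![1+lam,0;0,1+lam] := by
    ext i j
    fin_cases i <;> fin_cases j <;>
      simp [hi11, hiuu, h1, h2, horth, horth', Matrix.one_apply] <;> ring
  have hM2inv : (!![1+lam,0;0,1+lam] : Matrix (Fin 2) (Fin 2) ℝ)⁻¹
      = (1+lam)⁻¹ • !![1,0;0,1] := by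
    apply Matrix.inv_eq_right_inv
    ext i j
    fin_cases i <;> fin_cases j <;>
      · simp [Matrix.mul_apply, Fin.sum_univ_two, Matrix.one_apply]
        try field_simp
  have key1 : (inner ℝ ustar ustar : ℝ) - postK (id : E → E) lam ![u1, u1] ustar ustar
      = 2 * a ^ 2 / (2 + lam) := by
    simp only [postK, id_eq, hM1, hM1inv]
    simp [Matrix.mulVec, dotProduct, Fin.sum_univ_two, ha', ha2]
    field_simp
    ring
  have key2 : (inner ℝ ustar ustar : ℝ) - postK (id : E → E) lam ![u1, u] ustar ustar
      = (a ^ 2 + b ^ 2) / (1 + lam) := by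
    simp only [postK, id_eq, hM2, hM2inv]
    simp [Matrix.mulVec, dotProduct, Fin.sum_univ_two, ha', ha2, hb', hb2]
    field_simp
  refine ⟨key1, key2, ?_⟩
  rw [key1, key2, div_lt_div_iff₀ h2l h1l, div_mul_eq_mul_div, div_lt_iff₀ h2l]
  constructor <;> intro h <;> nlinarith
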